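/- For all nonnegative integers k, l with k ≥ l+1 and all nonzero complex numbers a, b, a′, b′, the recurrence g_{k,l+1}(a,b,a′,b′) = ((a+a′)/(l+1))·g_{k,l}(a,b,a′,b′) + (1/(l+1))·g_{k−1,l}(a,b,a′,b′) holds (all three series converging absolutely). -/

import Mathlib

open scoped BigOperators

/-- Generalized Laguerre polynomial `L_n^m(x) = Σ_{q=0}^n C(n+m, n−q)·(−x)^q/q!`. -/
noncomputable def lag (n m : ℕ) (x : ℂ) : ℂ :=
  ∑ q ∈ Finset.range (n + 1), ((n + m).choose (n - q) : ℂ) * (-x) ^ q / (q.factorial : ℂ)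

/-- The `j`-th term of the series defining `g_{kl}(a,b,a′,b′)`. -/
noncomputable def gTerm (k l : ℕ) (a b a' b' : ℂ) (j : ℕ) : ℂ :=
  (j.factorial : ℂ) * (a * b') ^ j *
    ((a * b) ^ (-(min k j : ℤ)) / ((max k j).factorial : ℂ)) *
      lag (min k j) (Nat.dist k j) (-(a * b)) *
    ((a' * b') ^ (-(min l j : ℤ)) / ((max l j).factorial : ℂ)) *
      lag (min l j) (Nat.dist l j) (-(a' * b'))

/-- `g_{kl}(a,b,a′,b′)`. -/
noncomputable def gkl (k l : ℕ) (a b a' b' : ℂ) : ℂ :=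
  a' ^ l * b ^ k * ∑' j : ℕ, gTerm k l a b a' b' j

noncomputable def H (k j : ℕ) (u v : ℂ) : ℂ :=
  ∑ i ∈ Finset.range (min k j + 1),
    u ^ (k - i) * v ^ (j - i) / ((k - i).factorial * ((j - i).factorial * i.factorial) : ℂ)

lemma Hsymm (k j : ℕ) (u v : ℂ) : H k j u v = H j k v u := by
  unfold H
  rw [min_comm]
  exact Finset.sum_congr rfl (fun i _ => by ring)

lemma lag_block_le (u v : ℂ) (hu : u ≠ 0) (hv : v ≠ 0) (k j : ℕ) (hjk : j ≤ k) :
    (u * v) ^ (-(min k j : ℤ)) / ((max k j).factorial : ℂ) *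
      lag (min k j) (Nat.dist k j) (-(u * v)) =
    u ^ (-(k : ℤ)) * v ^ (-(j : ℤ)) * H k j u v := by
  have hmin : min k j = j := min_eq_right hjk
  have hmax : max k j = k := max_eq_left hjk
  have hdist : Nat.dist k j = k - j := Nat.dist_eq_sub_of_le_right hjk
  rw [hmin, hmax, hdist]
  unfold lag H
  rw [hmin]
  rw [← Finset.sum_range_reflect _ (j+1)]
  rw [Finset.mul_sum, Finset.mul_sum]
  refine Finset.sum_congr rfl (fun i hi => ?_)
  rw [Finset.mem_range] at hi
  have hij : i ≤ j := Nat.lt_succ_iff.mp hi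
  have h1 : j + 1 - 1 - i = j - i := by omega
  rw [h1]
  have h2 : j + (k - j) = k := by omega
  rw [h2]
  have h3 : j - (j - i) = i := by omega
  rw [h3]
  have huv : u * v ≠ 0 := mul_ne_zero hu hv
  have hik : i ≤ k := le_trans hij hjk
  -- choose k i * i! * (k-i)! = k!
  have hch : ((k.choose i : ℂ)) * (i.factorial : ℂ) * ((k - i).factorial : ℂ) = (k.factorial : ℂ) := by
    have := Nat.choose_mul_factorial_mul_factorial hik
    exact_mod_cast congrArg (Nat.cast : ℕ → ℂ) this
  have e1 : (-(-(u*v)))^(j-i) = (u*v)^(j-i) := by rw [neg_neg]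
  rw [e1]
  -- LHS: (u*v)^(-j) / k! * (choose * (u*v)^(j-i) / (j-i)!)
  -- RHS: u^(-k) * v^(-j) * (u^(k-i) * v^(j-i) / ((k-i)! * ((j-i)! * i!)))
  have zu : u ^ (-(k:ℤ)) * u ^ ((k - i : ℕ) : ℤ) = u ^ (-(i:ℤ)) := by
    rw [← zpow_add₀ hu]; congr 1; omega
  have zv : v ^ (-(j:ℤ)) * v ^ ((j - i : ℕ) : ℤ) = v ^ (-(i:ℤ)) := by
    rw [← zpow_add₀ hv]; congr 1; omega
  have zuv : (u*v) ^ (-(j:ℤ)) * (u*v) ^ ((j - i : ℕ) : ℤ) = (u*v) ^ (-(i:ℤ)) := by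
    rw [← zpow_add₀ huv]; congr 1; omega
  have hne : (i.factorial : ℂ) ≠ 0 := Nat.cast_ne_zero.mpr (Nat.factorial_ne_zero i)
  have hne2 : ((k-i).factorial : ℂ) ≠ 0 := Nat.cast_ne_zero.mpr (Nat.factorial_ne_zero _)
  have hne3 : ((j-i).factorial : ℂ) ≠ 0 := Nat.cast_ne_zero.mpr (Nat.factorial_ne_zero _)
  have hnk : (k.factorial : ℂ) ≠ 0 := Nat.cast_ne_zero.mpr (Nat.factorial_ne_zero _)
  rw [← zpow_natCast u (k-i), ← zpow_natCast v (j-i), ← zpow_natCast (u*v) (j-i)]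
  have emul : (u*v) ^ (-(i:ℤ)) = u ^ (-(i:ℤ)) * v ^ (-(i:ℤ)) := mul_zpow u v _
  rw [show ((k:ℤ) ⊓ (j:ℤ)) = (j:ℤ) from min_eq_right (by exact_mod_cast hjk)]
  rw [div_mul_div_comm, ← mul_div_assoc, div_eq_div_iff (mul_ne_zero hnk hne3) (mul_ne_zero hne2 (mul_ne_zero hne3 hne))]
  linear_combination
    (↑(k.choose i) * ((k-i).factorial:ℂ) * ((j-i).factorial:ℂ) * (i.factorial:ℂ)) * zuv
    + (↑(k.choose i) * ((k-i).factorial:ℂ) * ((j-i).factorial:ℂ) * (i.factorial:ℂ)) * emul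
    - (↑(k.choose i) * ((k-i).factorial:ℂ) * ((j-i).factorial:ℂ) * (i.factorial:ℂ) * (v ^ (-(j:ℤ)) * v ^ ((j-i:ℕ):ℤ))) * zu
    - (↑(k.choose i) * ((k-i).factorial:ℂ) * ((j-i).factorial:ℂ) * (i.factorial:ℂ) * u ^ (-(i:ℤ))) * zv
    + (u ^ (-(k:ℤ)) * u ^ ((k-i:ℕ):ℤ) * v ^ (-(j:ℤ)) * v ^ ((j-i:ℕ):ℤ) * ((j-i).factorial:ℂ)) * hch

lemma lag_block (u v : ℂ) (hu : u ≠ 0) (hv : v ≠ 0) (k j : ℕ) :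
    (u * v) ^ (-(min k j : ℤ)) / ((max k j).factorial : ℂ) *
      lag (min k j) (Nat.dist k j) (-(u * v)) =
    u ^ (-(k : ℤ)) * v ^ (-(j : ℤ)) * H k j u v := by
  rcases le_total j k with h | h
  · exact lag_block_le u v hu hv k j h
  · have := lag_block_le v u hv hu j k h
    rw [min_comm k j, min_comm (k:ℤ) (j:ℤ), max_comm k j, Nat.dist_comm k j, mul_comm u v, Hsymm k j u v]
    rw [this]; ring

lemma gTerm_eq (k l : ℕ) (a b a' b' : ℂ) (ha : a ≠ 0) (hb : b ≠ 0) (ha' : a' ≠ 0) (hb' : b' ≠ 0)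
    (j : ℕ) :
    gTerm k l a b a' b' j =
      a ^ (-(k : ℤ)) * a' ^ (-(l : ℤ)) *
        ((j.factorial : ℂ) * (a / b) ^ j * H k j a b * H l j a' b') := by
  unfold gTerm
  rw [mul_assoc ((j.factorial : ℂ) * (a * b') ^ j), lag_block a b ha hb k j]
  rw [mul_assoc, lag_block a' b' ha' hb' l j]
  have h1 : (a / b) ^ j = (a * b') ^ j * b ^ (-(j:ℤ)) * b' ^ (-(j:ℤ)) := by
    rw [div_pow, mul_pow, zpow_neg, zpow_neg, zpow_natCast, zpow_natCast]
    field_simp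
  rw [h1]; ring

lemma H_zero (l : ℕ) (u v : ℂ) : H l 0 u v = u ^ l / (l.factorial : ℂ) := by
  simp [H]

lemma H_rec_zero (l : ℕ) (u v : ℂ) :
    ((l : ℂ) + 1) * H (l + 1) 0 u v = u * H l 0 u v := by
  rw [H_zero, H_zero, Nat.factorial_succ]
  have h1 : (l.factorial : ℂ) ≠ 0 := Nat.cast_ne_zero.mpr (Nat.factorial_ne_zero l)
  have h2 : ((l : ℂ) + 1) ≠ 0 := Nat.cast_add_one_ne_zero l
  rw [Nat.cast_mul, Nat.cast_add, Nat.cast_one, pow_succ]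
  field_simp

lemma H_rec (l j : ℕ) (u v : ℂ) :
    ((l : ℂ) + 1) * H (l + 1) (j + 1) u v = u * H l (j + 1) u v + H l j u v := by
  have key : ∀ i ≤ l, ((l + 1 - i : ℕ) : ℂ) *
      (u ^ (l + 1 - i) * v ^ (j + 1 - i) /
        ((l + 1 - i).factorial * ((j + 1 - i).factorial * i.factorial) : ℂ)) =
      u * (u ^ (l - i) * v ^ (j + 1 - i) /
        ((l - i).factorial * ((j + 1 - i).factorial * i.factorial) : ℂ)) := by
    intro i hi
    have h1 : l + 1 - i = (l - i) + 1 := by omega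
    rw [h1, pow_succ, Nat.factorial_succ, Nat.cast_mul, Nat.cast_add, Nat.cast_one]
    have f1 : ((l - i).factorial : ℂ) ≠ 0 := Nat.cast_ne_zero.mpr (Nat.factorial_ne_zero _)
    have f2 : ((j + 1 - i).factorial : ℂ) ≠ 0 := Nat.cast_ne_zero.mpr (Nat.factorial_ne_zero _)
    have f3 : (i.factorial : ℂ) ≠ 0 := Nat.cast_ne_zero.mpr (Nat.factorial_ne_zero _)
    have f4 : ((l - i : ℕ) : ℂ) + 1 ≠ 0 := Nat.cast_add_one_ne_zero _
    rw [mul_div_assoc', mul_div_assoc',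
      div_eq_div_iff (mul_ne_zero (mul_ne_zero f4 f1) (mul_ne_zero f2 f3))
        (mul_ne_zero f1 (mul_ne_zero f2 f3))]
    ring
  unfold H
  have hm : min (l + 1) (j + 1) = min l j + 1 := by omega
  rw [hm, Finset.mul_sum, Finset.mul_sum]
  have split : ∀ i ∈ Finset.range (min l j + 1 + 1), ((l : ℂ) + 1) *
      (u ^ (l + 1 - i) * v ^ (j + 1 - i) /
        ((l + 1 - i).factorial * ((j + 1 - i).factorial * i.factorial) : ℂ)) =
      ((l + 1 - i : ℕ) : ℂ) * (u ^ (l + 1 - i) * v ^ (j + 1 - i) /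
        ((l + 1 - i).factorial * ((j + 1 - i).factorial * i.factorial) : ℂ)) +
      (i : ℂ) * (u ^ (l + 1 - i) * v ^ (j + 1 - i) /
        ((l + 1 - i).factorial * ((j + 1 - i).factorial * i.factorial) : ℂ)) := by
    intro i hi
    rw [Finset.mem_range] at hi
    have hil : i ≤ l + 1 := by omega
    have : ((l + 1 - i : ℕ) : ℂ) + (i : ℂ) = (l : ℂ) + 1 := by
      push_cast [Nat.cast_sub hil]; ring
    rw [← this]; ring
  rw [Finset.sum_congr rfl split, Finset.sum_add_distrib]
  congr 1
  · -- first sum = u * (sum for H l (j+1))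
    rcases le_or_gt l j with h | h
    · have hm1 : min l j = l := min_eq_left h
      have hm2 : min l (j + 1) = l := min_eq_left (by omega)
      rw [hm1, hm2, Finset.sum_range_succ]
      have hz : ((l + 1 - (l + 1) : ℕ) : ℂ) = 0 := by norm_num
      rw [hz, zero_mul, add_zero]
      exact Finset.sum_congr rfl (fun i hi => key i (by
        rw [Finset.mem_range] at hi; omega))
    · have hm1 : min l j = j := min_eq_right (le_of_lt h)
      have hm2 : min l (j + 1) = j + 1 := min_eq_right (by omega)
      rw [hm1, hm2]
      exact Finset.sum_congr rfl (fun i hi => key i (by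
        rw [Finset.mem_range] at hi; omega))
  · -- second sum = H l j
    rw [Finset.sum_range_succ']
    simp only [Nat.cast_zero, zero_mul, add_zero]
    refine Finset.sum_congr rfl (fun i hi => ?_)
    have h1 : l + 1 - (i + 1) = l - i := by omega
    have h2 : j + 1 - (i + 1) = j - i := by omega
    rw [h1, h2, Nat.factorial_succ, Nat.cast_mul, Nat.cast_add, Nat.cast_one]
    have f1 : ((l - i).factorial : ℂ) ≠ 0 := Nat.cast_ne_zero.mpr (Nat.factorial_ne_zero _)
    have f2 : ((j - i).factorial : ℂ) ≠ 0 := Nat.cast_ne_zero.mpr (Nat.factorial_ne_zero _)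
    have f3 : (i.factorial : ℂ) ≠ 0 := Nat.cast_ne_zero.mpr (Nat.factorial_ne_zero _)
    have f4 : ((i : ℕ) : ℂ) + 1 ≠ 0 := Nat.cast_add_one_ne_zero _
    rw [mul_div_assoc',
      div_eq_div_iff (mul_ne_zero f1 (mul_ne_zero f2 (mul_ne_zero f4 f3)))
        (mul_ne_zero f1 (mul_ne_zero f2 f3))]
    ring

lemma summable_psi (k l : ℕ) (x : ℝ) (hx : 0 < x) :
    Summable (fun j : ℕ => (j.factorial : ℝ) * x ^ j /
      ((j - k).factorial * (j - l).factorial)) := by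
  set f := fun j : ℕ => (j.factorial : ℝ) * x ^ j / ((j - k).factorial * (j - l).factorial)
  apply summable_of_ratio_norm_eventually_le (r := 1/2) (by norm_num)
  obtain ⟨M, hM⟩ := exists_nat_ge (8 * x)
  filter_upwards [Filter.eventually_ge_atTop (max (2*k) (max (2*l) M))] with n hn
  have hk2 : 2*k ≤ n := le_trans (le_max_left _ _) hn
  have hl2 : 2*l ≤ n := le_trans (le_max_left _ _) (le_trans (le_max_right _ _) hn)
  have hMn : M ≤ n := le_trans (le_max_right _ _) (le_trans (le_max_right _ _) hn)
  have hk : k ≤ n := by omega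
  have hl : l ≤ n := by omega
  have e1 : n + 1 - k = (n - k) + 1 := by omega
  have e2 : n + 1 - l = (n - l) + 1 := by omega
  have pos1 : (0:ℝ) < ((n-k).factorial : ℝ) := by positivity
  have pos2 : (0:ℝ) < ((n-l).factorial : ℝ) := by positivity
  have hfn : (0:ℝ) ≤ f n := by
    simp only [f]; positivity
  have key : f (n+1) = (((n:ℝ)+1) * x / ((((n-k):ℕ):ℝ)+1) / ((((n-l):ℕ):ℝ)+1)) * f n := by
    simp only [f]
    rw [e1, e2, Nat.factorial_succ (n-k), Nat.factorial_succ (n-l), Nat.factorial_succ n, pow_succ]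
    push_cast
    have c1 : ((((n-k):ℕ):ℝ)+1) ≠ 0 := by positivity
    have c2 : ((((n-l):ℕ):ℝ)+1) ≠ 0 := by positivity
    field_simp
  have hcast1 : (((n-k):ℕ):ℝ) = (n:ℝ) - k := by push_cast [Nat.cast_sub hk]; ring
  have hcast2 : (((n-l):ℕ):ℝ) = (n:ℝ) - l := by push_cast [Nat.cast_sub hl]; ring
  have hr : ((n:ℝ)+1) * x / ((((n-k):ℕ):ℝ)+1) / ((((n-l):ℕ):ℝ)+1) ≤ 1/2 := by
    rw [div_le_iff₀ (by positivity), div_le_iff₀ (by positivity), hcast1, hcast2]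
    have h8 : 8 * x ≤ (n:ℝ) := le_trans hM (Nat.cast_le.mpr hMn)
    have hkr : 2*(k:ℝ) ≤ n := by exact_mod_cast hk2
    have hlr : 2*(l:ℝ) ≤ n := by exact_mod_cast hl2
    nlinarith [hx.le, mul_nonneg hx.le (Nat.cast_nonneg n)]
  rw [Real.norm_eq_abs, Real.norm_eq_abs, abs_of_nonneg (by simp only [f]; positivity),
    abs_of_nonneg hfn, key]
  exact mul_le_mul_of_nonneg_right hr hfn |>.trans_eq rfl

lemma H_bound (k j : ℕ) (u v : ℂ) :
    ‖H k j u v‖ ≤ ((k:ℝ)+1) * (max 1 ‖u‖)^k * (max 1 ‖v‖)^j / ((j-k).factorial : ℝ) := by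
  have hMu : (1:ℝ) ≤ max 1 ‖u‖ := le_max_left _ _
  have hMv : (1:ℝ) ≤ max 1 ‖v‖ := le_max_left _ _
  calc ‖H k j u v‖ ≤ ∑ i ∈ Finset.range (min k j + 1),
      ‖u ^ (k - i) * v ^ (j - i) / ((k - i).factorial * ((j - i).factorial * i.factorial) : ℂ)‖ :=
        norm_sum_le _ _
    _ ≤ ∑ i ∈ Finset.range (min k j + 1),
        (max 1 ‖u‖)^k * (max 1 ‖v‖)^j / ((j-k).factorial : ℝ) := by
        refine Finset.sum_le_sum (fun i hi => ?_)
        rw [Finset.mem_range] at hi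
        have hik : i ≤ k := by omega
        rw [norm_div, norm_mul, norm_pow, norm_pow]
        have d1 : ((j-k).factorial : ℝ) ≤
            ‖((k - i).factorial : ℂ) * (((j - i).factorial : ℂ) * (i.factorial : ℂ))‖ := by
          rw [norm_mul, norm_mul, Complex.norm_natCast, Complex.norm_natCast, Complex.norm_natCast]
          have : (j-k).factorial ≤ (k - i).factorial * ((j - i).factorial * i.factorial) := by
            calc (j-k).factorial ≤ (j-i).factorial :=
                Nat.factorial_le (Nat.sub_le_sub_left hik j)
              _ ≤ (j - i).factorial * i.factorial :=
                Nat.le_mul_of_pos_right _ (Nat.factorial_pos i)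
              _ ≤ (k - i).factorial * ((j - i).factorial * i.factorial) :=
                Nat.le_mul_of_pos_left _ (Nat.factorial_pos (k-i))
          exact_mod_cast this
        have n1 : ‖u‖ ^ (k-i) ≤ (max 1 ‖u‖)^k :=
          le_trans (pow_le_pow_left₀ (norm_nonneg u) (le_max_right _ _) _)
            (pow_le_pow_right₀ hMu (Nat.sub_le k i))
        have n2 : ‖v‖ ^ (j-i) ≤ (max 1 ‖v‖)^j :=
          le_trans (pow_le_pow_left₀ (norm_nonneg v) (le_max_right _ _) _)
            (pow_le_pow_right₀ hMv (Nat.sub_le j i))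
        have hnum : ‖u‖ ^ (k-i) * ‖v‖ ^ (j-i) ≤ (max 1 ‖u‖)^k * (max 1 ‖v‖)^j :=
          mul_le_mul n1 n2 (by positivity) (by positivity)
        exact div_le_div₀ (by positivity) hnum (by positivity) d1
    _ = ((min k j + 1 : ℕ) : ℝ) * ((max 1 ‖u‖)^k * (max 1 ‖v‖)^j / ((j-k).factorial : ℝ)) := by
        rw [Finset.sum_const, Finset.card_range, nsmul_eq_mul]
    _ ≤ ((k:ℝ)+1) * (max 1 ‖u‖)^k * (max 1 ‖v‖)^j / ((j-k).factorial : ℝ) := by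
        have hmin : ((min k j + 1 : ℕ) : ℝ) ≤ (k:ℝ)+1 := by
          exact_mod_cast Nat.succ_le_succ (min_le_left k j)
        refine le_trans (mul_le_mul_of_nonneg_right hmin (by positivity)) (le_of_eq (by ring))

lemma H_rec' (k j : ℕ) (hk : 1 ≤ k) (u v : ℂ) :
    ((j : ℂ) + 1) * H k (j + 1) u v = v * H k j u v + H (k - 1) j u v := by
  obtain ⟨k', rfl⟩ : ∃ k', k = k' + 1 := ⟨k - 1, by omega⟩
  rw [Hsymm (k'+1) (j+1), Hsymm (k'+1) j, show k' + 1 - 1 = k' from rfl, Hsymm k' j]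
  exact H_rec j k' v u

lemma summable_normT (k l : ℕ) (a b a' b' : ℂ) (ha : a ≠ 0) (hb : b ≠ 0) :
    Summable (fun j : ℕ => ‖(j.factorial : ℂ) * (a/b)^j * H k j a b * H l j a' b'‖) := by
  have hab : a / b ≠ 0 := div_ne_zero ha hb
  have hx : 0 < ‖a/b‖ * (max 1 ‖b‖) * (max 1 ‖b'‖) := by
    have : 0 < ‖a/b‖ := norm_pos_iff.mpr hab
    positivity
  refine Summable.of_nonneg_of_le (fun j => norm_nonneg _) (fun j => ?_)
    (((summable_psi k l _ hx).mul_left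
      ((((k:ℝ)+1) * (max 1 ‖a‖)^k) * (((l:ℝ)+1) * (max 1 ‖a'‖)^l))))
  rw [norm_mul, norm_mul, norm_mul, Complex.norm_natCast, norm_pow]
  have B1 := H_bound k j a b
  have B2 := H_bound l j a' b'
  calc (j.factorial:ℝ) * ‖a/b‖^j * ‖H k j a b‖ * ‖H l j a' b'‖
      ≤ (j.factorial:ℝ) * ‖a/b‖^j * (((k:ℝ)+1) * (max 1 ‖a‖)^k * (max 1 ‖b‖)^j / ((j-k).factorial : ℝ))
        * (((l:ℝ)+1) * (max 1 ‖a'‖)^l * (max 1 ‖b'‖)^j / ((j-l).factorial : ℝ)) := by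
        gcongr
    _ = (((k:ℝ)+1) * (max 1 ‖a‖)^k) * (((l:ℝ)+1) * (max 1 ‖a'‖)^l) *
        ((j.factorial : ℝ) * (‖a/b‖ * (max 1 ‖b‖) * (max 1 ‖b'‖)) ^ j /
          ((j - k).factorial * (j - l).factorial)) := by
        rw [mul_pow, mul_pow]
        ring

noncomputable def Tser (a b a' b' : ℂ) (m n j : ℕ) : ℂ :=
  (j.factorial : ℂ) * (a/b)^j * H m j a b * H n j a' b'

set_option maxHeartbeats 1000000 in
/-- For `k ≥ l+1`, the recurrence
`g_{k,l+1} = ((a+a′)/(l+1))·g_{k,l} + (1/(l+1))·g_{k−1,l}` holds,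
all three series converging absolutely. -/
theorem g_rec (k l : ℕ) (hkl : l + 1 ≤ k) (a b a' b' : ℂ)
    (ha : a ≠ 0) (hb : b ≠ 0) (ha' : a' ≠ 0) (hb' : b' ≠ 0) :
    Summable (fun j : ℕ => ‖gTerm k (l + 1) a b a' b' j‖) ∧
    Summable (fun j : ℕ => ‖gTerm k l a b a' b' j‖) ∧
    Summable (fun j : ℕ => ‖gTerm (k - 1) l a b a' b' j‖) ∧
      gkl k (l + 1) a b a' b' =
        ((a + a') / (l + 1 : ℂ)) * gkl k l a b a' b' +
          (1 / (l + 1 : ℂ)) * gkl (k - 1) l a b a' b' := by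
  have hk1 : 1 ≤ k := le_trans (Nat.le_add_left 1 l) hkl
  -- T and S
  have hT : ∀ m n j, Tser a b a' b' m n j
      = (j.factorial : ℂ) * (a/b)^j * H m j a b * H n j a' b' := fun _ _ _ => rfl
  have hsumnorm : ∀ m n : ℕ, Summable (fun j => ‖Tser a b a' b' m n j‖) :=
    fun m n => summable_normT m n a b a' b' ha hb
  have hsum : ∀ m n : ℕ, Summable (fun j => Tser a b a' b' m n j) :=
    fun m n => (hsumnorm m n).of_norm
  -- summability of gTerm norms
  have gsum : ∀ m n : ℕ, Summable (fun j => ‖gTerm m n a b a' b' j‖) := by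
    intro m n
    have : (fun j => ‖gTerm m n a b a' b' j‖)
        = fun j => ‖a ^ (-(m:ℤ)) * a' ^ (-(n:ℤ))‖ * ‖Tser a b a' b' m n j‖ := by
      funext j
      rw [gTerm_eq m n a b a' b' ha hb ha' hb' j, norm_mul]
      rfl
    rw [this]
    exact (hsumnorm m n).mul_left _
  refine ⟨gsum k (l+1), gsum k l, gsum (k-1) l, ?_⟩
  -- gkl in terms of S
  have gkl_eq : ∀ m n : ℕ, gkl m n a b a' b' = (b/a)^m * ∑' j, Tser a b a' b' m n j := by
    intro m n
    unfold gkl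
    rw [tsum_congr (gTerm_eq m n a b a' b' ha hb ha' hb'), tsum_mul_left]
    have h1 : a' ^ n * (a' ^ (-(n:ℤ))) = 1 := by
      rw [← zpow_natCast a' n, ← zpow_add₀ ha']; simp
    have h2 : b ^ m * (a ^ (-(m:ℤ))) = (b/a)^m := by
      rw [div_pow, ← zpow_natCast b m, ← zpow_natCast a m, zpow_neg]
      rw [div_eq_mul_inv]
    calc a' ^ n * b ^ m * (a ^ (-(m:ℤ)) * a' ^ (-(n:ℤ)) * ∑' j, Tser a b a' b' m n j)
        = (a' ^ n * (a' ^ (-(n:ℤ)))) * (b ^ m * (a ^ (-(m:ℤ)))) * ∑' j, Tser a b a' b' m n j := by ring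
      _ = (b/a)^m * ∑' j, Tser a b a' b' m n j := by rw [h1, h2, one_mul]
  -- the key identity
  have hl1 : ((l:ℂ) + 1) ≠ 0 := Nat.cast_add_one_ne_zero l
  set U : ℕ → ℂ :=
    fun j => ((l:ℂ)+1) * Tser a b a' b' k (l+1) j - a' * Tser a b a' b' k l j with hU
  have hUsum : Summable U := ((hsum k (l+1)).mul_left _).sub ((hsum k l).mul_left _)
  have hU0 : U 0 = 0 := by
    simp only [hU, hT]
    linear_combination (((0:ℕ).factorial : ℂ) * (a/b)^0 * H k 0 a b) * H_rec_zero l a' b'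
  have hUsucc : ∀ j : ℕ, U (j+1) = a * Tser a b a' b' k l j + (a/b) * Tser a b a' b' (k-1) l j := by
    intro j
    simp only [hU, hT]
    have e1 : ((l:ℂ)+1) * H (l+1) (j+1) a' b' - a' * H l (j+1) a' b' = H l j a' b' := by
      rw [H_rec l j a' b']; ring
    have e2 : ((j:ℂ)+1) * H k (j+1) a b = b * H k j a b + H (k-1) j a b :=
      H_rec' k j hk1 a b
    have e3 : ((j+1).factorial : ℂ) = ((j:ℂ)+1) * (j.factorial : ℂ) := by
      rw [Nat.factorial_succ]; push_cast; ring
    have e4 : (a/b)^(j+1) * b = (a/b)^j * a := by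
      rw [pow_succ]; field_simp
    calc ((l:ℂ)+1) * (((j+1).factorial : ℂ) * (a/b)^(j+1) * H k (j+1) a b * H (l+1) (j+1) a' b')
          - a' * (((j+1).factorial : ℂ) * (a/b)^(j+1) * H k (j+1) a b * H l (j+1) a' b')
        = ((j+1).factorial : ℂ) * (a/b)^(j+1) * H k (j+1) a b *
            (((l:ℂ)+1) * H (l+1) (j+1) a' b' - a' * H l (j+1) a' b') := by ring
      _ = (j.factorial : ℂ) * (a/b)^(j+1) * (((j:ℂ)+1) * H k (j+1) a b) * H l j a' b' := by
          rw [e1, e3]; ring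
      _ = (j.factorial : ℂ) * (a/b)^(j+1) * (b * H k j a b + H (k-1) j a b) * H l j a' b' := by
          rw [e2]
      _ = a * Tser a b a' b' k l j + (a/b) * Tser a b a' b' (k-1) l j := by
          simp only [hT]
          rw [show (j.factorial : ℂ) * (a/b)^(j+1) * (b * H k j a b + H (k-1) j a b) * H l j a' b'
            = ((a/b)^(j+1) * b) * ((j.factorial : ℂ) * H k j a b * H l j a' b')
              + (a/b) * ((j.factorial : ℂ) * (a/b)^j * H (k-1) j a b * H l j a' b') from by
                rw [pow_succ]; ring]
          rw [e4]; ring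
  have key : ((l:ℂ)+1) * ∑' j, Tser a b a' b' k (l+1) j
      = (a + a') * ∑' j, Tser a b a' b' k l j + (a/b) * ∑' j, Tser a b a' b' (k-1) l j := by
    have h1 : ∑' j, U j = ((l:ℂ)+1) * ∑' j, Tser a b a' b' k (l+1) j - a' * ∑' j, Tser a b a' b' k l j := by
      rw [hU]
      rw [Summable.tsum_sub ((hsum k (l+1)).mul_left _) ((hsum k l).mul_left _),
        tsum_mul_left, tsum_mul_left]
    have h2 : ∑' j, U j = a * ∑' j, Tser a b a' b' k l j + (a/b) * ∑' j, Tser a b a' b' (k-1) l j := by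
      rw [Summable.tsum_eq_zero_add hUsum, hU0, zero_add]
      calc ∑' j, U (j+1) = ∑' j, (a * Tser a b a' b' k l j + (a/b) * Tser a b a' b' (k-1) l j) :=
            tsum_congr hUsucc
        _ = a * ∑' j, Tser a b a' b' k l j + (a/b) * ∑' j, Tser a b a' b' (k-1) l j := by
            rw [Summable.tsum_add ((hsum k l).mul_left _) ((hsum (k-1) l).mul_left _),
              tsum_mul_left, tsum_mul_left]
    rw [h1] at h2
    linear_combination h2
  -- conclude
  rw [gkl_eq k (l+1), gkl_eq k l, gkl_eq (k-1) l]
  have hba : (b/a) ≠ 0 := div_ne_zero hb ha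
  have hpow : (b/a)^k * (a/b) = (b/a)^(k-1) := by
    obtain ⟨k', rfl⟩ : ∃ k', k = k' + 1 := ⟨k - 1, by omega⟩
    rw [show k' + 1 - 1 = k' from rfl, pow_succ]
    field_simp
  have : (b/a)^k * (((l:ℂ)+1) * ∑' j, Tser a b a' b' k (l+1) j)
      = (b/a)^k * ((a + a') * ∑' j, Tser a b a' b' k l j + (a/b) * ∑' j, Tser a b a' b' (k-1) l j) := by rw [key]
  have expand : ((l:ℂ)+1) * ((b/a)^k * ∑' j, Tser a b a' b' k (l+1) j)
      = (a + a') * ((b/a)^k * ∑' j, Tser a b a' b' k l j) + (b/a)^(k-1) * ∑' j, Tser a b a' b' (k-1) l j := by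
    rw [← hpow]
    linear_combination this
  have goal' : (b/a)^k * ∑' j, Tser a b a' b' k (l+1) j
      = ((a + a') / ((l:ℂ)+1)) * ((b/a)^k * ∑' j, Tser a b a' b' k l j)
        + (1 / ((l:ℂ)+1)) * ((b/a)^(k-1) * ∑' j, Tser a b a' b' (k-1) l j) := by
    have hX : (b/a)^k * ∑' j, Tser a b a' b' k (l+1) j
        = ((a + a') * ((b/a)^k * ∑' j, Tser a b a' b' k l j)
            + (b/a)^(k-1) * ∑' j, Tser a b a' b' (k-1) l j) / ((l:ℂ)+1) := by
      rw [eq_div_iff hl1]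
      linear_combination expand
    rw [hX]; ring
  exact goal'
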